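/- Let Z_1,...,Z_p be independent standard normal random variables and for θ with all θ_i > 0 let F(t;θ) be the distribution function of T_θ = Σ_{i=1}^p Z_i²/θ_i, with f_i(t;θ) = ∂F(t;θ)/∂θ_i. If θ_i < θ_j then f_i(t;θ) > f_j(t;θ) for every t > 0. -/

import Mathlib

open MeasureTheory ProbabilityTheory Real
open Set Filter

/-- Law of a vector of `p` i.i.d. standard normal random variables. -/
noncomputable def stdGaussianPi (p : ℕ) : Measure (Fin p → ℝ) :=
  Measure.pi fun _ => gaussianReal 0 1

instance stdGaussianPi_prob (p : ℕ) : IsProbabilityMeasure (stdGaussianPi p) := by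
  unfold stdGaussianPi; infer_instance

/-- `F(t;θ) = P(∑ Z i ^ 2 / θ i ≤ t)` for i.i.d. standard normals `Z i`. -/
noncomputable def Fcdf (p : ℕ) (θ : Fin p → ℝ) (t : ℝ) : ℝ :=
  (stdGaussianPi p {z | ∑ i, (z i) ^ 2 / θ i ≤ t}).toReal

/-! ### One-dimensional CDF of `Z^2` -/

noncomputable def Gm (u : ℝ) : ℝ := (gaussianReal 0 1 {y : ℝ | y ^ 2 ≤ u}).toReal

noncomputable def gpdf (x : ℝ) : ℝ := gaussianPDFReal 0 1 x

lemma continuous_gpdf : Continuous gpdf := by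
  unfold gpdf gaussianPDFReal
  fun_prop

lemma gpdf_even (x : ℝ) : gpdf (-x) = gpdf x := by
  unfold gpdf gaussianPDFReal
  norm_num

lemma gpdf_nonneg (x : ℝ) : 0 ≤ gpdf x := gaussianPDFReal_nonneg 0 1 x

lemma sq_le_iff_abs_le_sqrt {y u : ℝ} (hu : 0 ≤ u) : y ^ 2 ≤ u ↔ |y| ≤ Real.sqrt u := by
  constructor
  · intro h
    rw [← Real.sqrt_sq_eq_abs]
    exact Real.sqrt_le_sqrt h
  · intro h
    calc y ^ 2 = |y| ^ 2 := (sq_abs y).symm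
    _ ≤ (Real.sqrt u) ^ 2 := by
        exact pow_le_pow_left₀ (abs_nonneg y) h 2
    _ = u := Real.sq_sqrt hu

noncomputable def Hm (s : ℝ) : ℝ := ∫ x in (0:ℝ)..s, gpdf x

lemma Gm_eq_two_Hm {u : ℝ} (hu : 0 ≤ u) : Gm u = 2 * Hm (Real.sqrt u) := by
  have hset : {y : ℝ | y ^ 2 ≤ u} = Icc (-Real.sqrt u) (Real.sqrt u) := by
    ext y
    simp only [mem_setOf_eq, mem_Icc, sq_le_iff_abs_le_sqrt hu, abs_le]
  have h1 : Gm u = ∫ x in Icc (-Real.sqrt u) (Real.sqrt u), gpdf x := by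
    rw [Gm, hset, gaussianReal_apply_eq_integral 0 one_ne_zero]
    rw [ENNReal.toReal_ofReal]
    · rfl
    · exact setIntegral_nonneg measurableSet_Icc fun x _ => gpdf_nonneg x
  have h2 : ∫ x in Icc (-Real.sqrt u) (Real.sqrt u), gpdf x
      = ∫ x in (-Real.sqrt u)..(Real.sqrt u), gpdf x := by
    rw [MeasureTheory.integral_Icc_eq_integral_Ioc,
      intervalIntegral.integral_of_le ((neg_nonpos_of_nonneg (Real.sqrt_nonneg u)).trans (Real.sqrt_nonneg u))]
  have h3 : ∫ x in (-Real.sqrt u)..(Real.sqrt u), gpdf x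
      = (∫ x in (-Real.sqrt u)..(0:ℝ), gpdf x) + ∫ x in (0:ℝ)..(Real.sqrt u), gpdf x := by
    rw [intervalIntegral.integral_add_adjacent_intervals] <;>
      exact continuous_gpdf.intervalIntegrable _ _
  have h4 : ∫ x in (-Real.sqrt u)..(0:ℝ), gpdf x = Hm (Real.sqrt u) := by
    have := intervalIntegral.integral_comp_neg (a := (0:ℝ)) (b := Real.sqrt u) gpdf
    simp only [neg_zero] at this
    rw [← this, Hm]
    congr 1
    ext x
    exact gpdf_even x
  rw [h1, h2, h3, h4, Hm]
  ring

lemma hasDerivAt_Gm {u : ℝ} (hu : 0 < u) :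
    HasDerivAt Gm (Real.exp (-u/2) / Real.sqrt (2 * π * u)) u := by
  have hH : HasDerivAt Hm (gpdf (Real.sqrt u)) (Real.sqrt u) :=
    intervalIntegral.integral_hasDerivAt_right
      (continuous_gpdf.intervalIntegrable _ _)
      (continuous_gpdf.stronglyMeasurableAtFilter _ _)
      continuous_gpdf.continuousAt
  have hsqrt : HasDerivAt Real.sqrt (1 / (2 * Real.sqrt u)) u :=
    Real.hasDerivAt_sqrt hu.ne'
  have hcomp : HasDerivAt (fun v => 2 * Hm (Real.sqrt v))
      (2 * (gpdf (Real.sqrt u) * (1 / (2 * Real.sqrt u)))) u :=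
    ((hH.comp u hsqrt)).const_mul 2
  have heq : (fun v => Gm v) =ᶠ[nhds u] (fun v => 2 * Hm (Real.sqrt v)) := by
    filter_upwards [eventually_gt_nhds hu] with v hv
    exact Gm_eq_two_Hm hv.le
  have : HasDerivAt Gm (2 * (gpdf (Real.sqrt u) * (1 / (2 * Real.sqrt u)))) u :=
    hcomp.congr_of_eventuallyEq heq
  convert this using 1
  unfold gpdf gaussianPDFReal
  have h1 : Real.sqrt u ≠ 0 := by positivity
  have h2 : (Real.sqrt u - 0) ^ 2 = u := by rw [sub_zero]; exact Real.sq_sqrt hu.le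
  rw [h2]
  push_cast
  rw [Real.sqrt_mul (by positivity : (0:ℝ) ≤ 2 * π) u]
  field_simp
lemma Gm_of_nonpos {u : ℝ} (hu : u ≤ 0) : Gm u = 0 := by
  have hsub : {y : ℝ | y ^ 2 ≤ u} ⊆ {(0:ℝ)} := by
    intro y hy
    simp only [mem_setOf_eq] at hy
    have h0 : y ^ 2 = 0 := le_antisymm (hy.trans hu) (sq_nonneg y)
    simpa using pow_eq_zero_iff (n := 2) (by norm_num) |>.mp h0
  have h0 : gaussianReal 0 1 {(0:ℝ)} = 0 :=
    gaussianReal_absolutelyContinuous 0 one_ne_zero (measure_singleton 0)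
  rw [Gm, measure_mono_null hsub h0, ENNReal.toReal_zero]

lemma Gm_nonneg (u : ℝ) : 0 ≤ Gm u := ENNReal.toReal_nonneg

lemma Gm_le_one (u : ℝ) : Gm u ≤ 1 := by
  rw [Gm]
  have := prob_le_one (μ := gaussianReal 0 1) (s := {y : ℝ | y ^ 2 ≤ u})
  exact ENNReal.toReal_le_of_le_ofReal one_pos.le (by simpa using this)

lemma Gm_mono : Monotone Gm := by
  intro u v huv
  exact ENNReal.toReal_mono (measure_ne_top _ _)
    (measure_mono fun y hy => le_trans hy huv)

lemma Gm_measurable : Measurable Gm := Gm_mono.measurable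

/-! ### The derivative kernel -/

noncomputable def Dk (a w : ℝ) : ℝ :=
  Real.sqrt w / Real.sqrt (2 * π * a) * Real.exp (-(a * w) / 2)

lemma Dk_nonneg (a w : ℝ) : 0 ≤ Dk a w := by
  unfold Dk; positivity

lemma Dk_of_nonpos {a w : ℝ} (hw : w ≤ 0) : Dk a w = 0 := by
  unfold Dk
  rw [Real.sqrt_eq_zero'.mpr hw]
  ring

lemma Dk_le {a w t : ℝ} (ha : 0 < a) (ht : 0 ≤ t) (hw : w ≤ t) :
    Dk a w ≤ Real.sqrt t / Real.sqrt (2 * π * a) := by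
  rcases le_or_gt w 0 with h | h
  · rw [Dk_of_nonpos h]; positivity
  · unfold Dk
    have h1 : Real.sqrt w ≤ Real.sqrt t := Real.sqrt_le_sqrt hw
    have h2 : Real.exp (-(a * w) / 2) ≤ 1 := by
      rw [Real.exp_le_one_iff]
      have : 0 ≤ a * w := by positivity
      linarith
    have h3 : (0:ℝ) < Real.sqrt (2 * π * a) := by positivity
    calc Real.sqrt w / Real.sqrt (2 * π * a) * Real.exp (-(a * w) / 2)
        ≤ Real.sqrt w / Real.sqrt (2 * π * a) * 1 := by
          apply mul_le_mul_of_nonneg_left h2; positivity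
      _ = Real.sqrt w / Real.sqrt (2 * π * a) := mul_one _
      _ ≤ Real.sqrt t / Real.sqrt (2 * π * a) := by
          gcongr


lemma measurable_Dk_snd (a : ℝ) : Measurable (Dk a) := by
  unfold Dk
  fun_prop

lemma hasDerivAt_Gm_mul (w : ℝ) {x : ℝ} (hx : 0 < x) :
    HasDerivAt (fun x => Gm (x * w)) (Dk x w) x := by
  rcases lt_or_ge 0 w with hw | hw
  · have hu : 0 < x * w := mul_pos hx hw
    have h1 : HasDerivAt (fun x : ℝ => x * w) w x := hasDerivAt_mul_const w
    have h2 : HasDerivAt (fun x => Gm (x * w))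
        (Real.exp (-(x * w) / 2) / Real.sqrt (2 * π * (x * w)) * w) x := by
      have := (hasDerivAt_Gm hu).comp x h1; exact this
    convert h2 using 1
    unfold Dk
    have h3 : Real.sqrt (2 * π * (x * w)) = Real.sqrt (2 * π * x) * Real.sqrt w := by
      rw [show 2 * π * (x * w) = (2 * π * x) * w by ring,
        Real.sqrt_mul (by positivity) w]
    rw [h3]
    have h4 : (0:ℝ) < Real.sqrt (2 * π * x) := by positivity
    have h5 : (0:ℝ) < Real.sqrt w := Real.sqrt_pos.mpr hw
    field_simp
    exact Real.sq_sqrt hw.le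
  · have hDk : Dk x w = 0 := Dk_of_nonpos hw
    rw [hDk]
    apply HasDerivAt.congr_of_eventuallyEq (hasDerivAt_const x 0)
    filter_upwards [eventually_gt_nhds hx] with y hy
    exact Gm_of_nonpos (mul_nonpos_of_nonneg_of_nonpos hy.le hw)
/-! ### Peeling one coordinate off the product Gaussian -/

lemma integrable_of_bounded {α : Type*} [MeasurableSpace α] {μ : Measure α}
    [IsProbabilityMeasure μ] {f : α → ℝ} (hm : AEStronglyMeasurable f μ) (C : ℝ)
    (h : ∀ z, |f z| ≤ C) : Integrable f μ :=
  Integrable.mono' (integrable_const C) hm (ae_of_all _ fun z => by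
    simpa [Real.norm_eq_abs] using h z)

lemma integral_peel {n : ℕ} (i : Fin (n + 1)) (f : (Fin (n + 1) → ℝ) → ℝ)
    (hf : Integrable f (stdGaussianPi (n + 1))) :
    (∫ z, f z ∂stdGaussianPi (n + 1))
      = ∫ z, (∫ y, f (Function.update z i y) ∂gaussianReal 0 1) ∂stdGaussianPi (n + 1) ∧
    Integrable (fun z => ∫ y, f (Function.update z i y) ∂gaussianReal 0 1)
      (stdGaussianPi (n + 1)) := by
  set γ : Measure ℝ := gaussianReal 0 1 with hγ
  set ν : Measure (Fin n → ℝ) := Measure.pi fun _ => γ with hν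
  set e := MeasurableEquiv.piFinSuccAbove (fun _ : Fin (n + 1) => ℝ) i with he
  have mp : MeasurePreserving e (stdGaussianPi (n + 1)) (γ.prod ν) :=
    measurePreserving_piFinSuccAbove (fun _ : Fin (n + 1) => γ) i
  have mps : MeasurePreserving e.symm (γ.prod ν) (stdGaussianPi (n + 1)) := mp.symm e
  have hesymm : ∀ (x : ℝ) (g : Fin n → ℝ), e.symm (x, g) = i.insertNth x g := fun x g => rfl
  -- integrability of f ∘ e.symm on the product
  have hfi : Integrable (fun q : ℝ × (Fin n → ℝ) => f (e.symm q)) (γ.prod ν) := by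
    have h2 := e.symm.measurableEmbedding.integrable_map_iff (g := f) (μ := γ.prod ν)
    rw [mps.map_eq] at h2
    exact h2.mp hf
  -- the inner function
  set c : (Fin n → ℝ) → ℝ := fun g => ∫ y, f (i.insertNth y g) ∂γ with hc
  have hcint : Integrable c ν := by
    have := hfi.integral_prod_right
    simpa [hesymm] using this
  -- snd is measure preserving
  have mpsnd : MeasurePreserving Prod.snd (γ.prod ν) ν :=
    ⟨measurable_snd, by rw [Measure.map_snd_prod]; simp⟩
  -- F ∘ e.symm = c ∘ snd
  have hFe : ∀ q : ℝ × (Fin n → ℝ),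
      (∫ y, f (Function.update (e.symm q) i y) ∂γ) = c q.2 := by
    rintro ⟨x, g⟩
    simp only [hesymm, hc]
    congr 1
    ext y
    rw [Fin.update_insertNth]
  have key1 : ∫ z, f z ∂stdGaussianPi (n + 1)
      = ∫ q : ℝ × (Fin n → ℝ), f (e.symm q) ∂(γ.prod ν) :=
    (mps.integral_comp e.symm.measurableEmbedding f).symm
  have key2 : ∫ q : ℝ × (Fin n → ℝ), f (e.symm q) ∂(γ.prod ν) = ∫ g, c g ∂ν := by
    rw [MeasureTheory.integral_prod_symm _ hfi]
    rfl
  have key3 : ∫ z, (∫ y, f (Function.update z i y) ∂γ) ∂stdGaussianPi (n + 1)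
      = ∫ q : ℝ × (Fin n → ℝ), c q.2 ∂(γ.prod ν) := by
    rw [← mps.integral_comp e.symm.measurableEmbedding
      (fun z => ∫ y, f (Function.update z i y) ∂γ)]
    exact integral_congr_ae (ae_of_all _ hFe)
  have hsm : AEStronglyMeasurable c (Measure.map Prod.snd (γ.prod ν)) := by
    rw [mpsnd.map_eq]; exact hcint.aestronglyMeasurable
  have key4 : ∫ q : ℝ × (Fin n → ℝ), c q.2 ∂(γ.prod ν) = ∫ g, c g ∂ν := by
    conv_rhs => rw [← mpsnd.map_eq]
    exact (integral_map measurable_snd.aemeasurable hsm).symm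
  constructor
  · rw [key1, key2, key3, key4]
  · -- integrability of the peeled function
    have h5 : Integrable (fun q : ℝ × (Fin n → ℝ) => c q.2) (γ.prod ν) :=
      (mpsnd.integrable_comp hcint.aestronglyMeasurable).mpr hcint
    have h6 := (mp.integrable_comp (g := fun q : ℝ × (Fin n → ℝ) => c q.2)
      h5.aestronglyMeasurable).mpr h5
    apply h6.congr
    apply ae_of_all
    intro z
    have : (e z).2 = i.removeNth z := rfl
    simp only [Function.comp, this, hc]
    congr 1
    ext y
    rw [Fin.insertNth_removeNth]
/-! ### The CDF as an integral, and its derivative -/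

noncomputable def Ssum {p : ℕ} (θ : Fin p → ℝ) (i : Fin p) (z : Fin p → ℝ) : ℝ :=
  ∑ k ∈ Finset.univ.erase i, (z k) ^ 2 / θ k

lemma measurable_Ssum {p : ℕ} (θ : Fin p → ℝ) (i : Fin p) : Measurable (Ssum θ i) := by
  apply Finset.measurable_sum
  intro k _
  exact ((measurable_pi_apply k).pow_const 2).div_const _

lemma Ssum_nonneg {p : ℕ} {θ : Fin p → ℝ} (hθ : ∀ k, 0 < θ k) (i : Fin p) (z : Fin p → ℝ) :
    0 ≤ Ssum θ i z := by
  apply Finset.sum_nonneg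
  intro k _
  have := hθ k
  positivity

lemma Fcdf_eq_integral_Gm {n : ℕ} (θ : Fin (n + 1) → ℝ) (hθ : ∀ k, 0 < θ k) (i : Fin (n + 1))
    {x : ℝ} (hx : 0 < x) (t : ℝ) :
    Fcdf (n + 1) (Function.update θ i x) t
      = ∫ z, Gm (x * (t - Ssum θ i z)) ∂stdGaussianPi (n + 1) := by
  set A : Set (Fin (n + 1) → ℝ) :=
    {z | ∑ k, (z k) ^ 2 / (Function.update θ i x) k ≤ t} with hA
  have hAm : MeasurableSet A := by
    apply measurableSet_le _ measurable_const
    apply Finset.measurable_sum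
    intro k _
    exact ((measurable_pi_apply k).pow_const 2).div_const _
  have hmem : ∀ (z : Fin (n + 1) → ℝ) (y : ℝ),
      Function.update z i y ∈ A ↔ y ^ 2 ≤ x * (t - Ssum θ i z) := by
    intro z y
    have hsplit : ∑ k, (Function.update z i y k) ^ 2 / (Function.update θ i x) k
        = y ^ 2 / x + Ssum θ i z := by
      rw [← Finset.add_sum_erase Finset.univ _ (Finset.mem_univ i)]
      congr 1
      · rw [Function.update_self, Function.update_self]
      · apply Finset.sum_congr rfl
        intro k hk
        have hki : k ≠ i := (Finset.mem_erase.mp hk).1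
        rw [Function.update_of_ne hki, Function.update_of_ne hki]
    simp only [hA, mem_setOf_eq, hsplit]
    rw [show y ^ 2 / x + Ssum θ i z ≤ t ↔ y ^ 2 / x ≤ t - Ssum θ i z from
      ⟨fun h => by linarith, fun h => by linarith⟩, div_le_iff₀ hx, mul_comm]
  have hind : Integrable (A.indicator (fun _ => (1:ℝ))) (stdGaussianPi (n + 1)) := by
    apply integrable_of_bounded ((measurable_const.indicator hAm).aestronglyMeasurable) 1
    intro z
    by_cases hz : z ∈ A <;> simp [indicator_apply, hz]
  have hpeel := integral_peel i (A.indicator (fun _ => (1:ℝ))) hind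
  have h1 : Fcdf (n + 1) (Function.update θ i x) t
      = ∫ z, A.indicator (fun _ => (1:ℝ)) z ∂stdGaussianPi (n + 1) := by
    rw [Fcdf]
    rw [show A.indicator (fun _ => (1:ℝ)) = A.indicator 1 from rfl]
    rw [integral_indicator_one hAm]
    rfl
  rw [h1, hpeel.1]
  apply integral_congr_ae (ae_of_all _ _)
  intro z
  have h2 : ∀ y : ℝ, A.indicator (fun _ => (1:ℝ)) (Function.update z i y)
      = ({y : ℝ | y ^ 2 ≤ x * (t - Ssum θ i z)}).indicator (fun _ => (1:ℝ)) y := by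
    intro y
    simp only [Set.indicator_apply, mem_setOf_eq, hmem z y]
  calc (∫ y, A.indicator (fun _ => (1:ℝ)) (Function.update z i y) ∂gaussianReal 0 1)
      = ∫ y, ({y : ℝ | y ^ 2 ≤ x * (t - Ssum θ i z)}).indicator (fun _ => (1:ℝ)) y
          ∂gaussianReal 0 1 := by
        exact integral_congr_ae (ae_of_all _ h2)
    _ = Gm (x * (t - Ssum θ i z)) := by
        rw [show ({y : ℝ | y ^ 2 ≤ x * (t - Ssum θ i z)}).indicator (fun _ => (1:ℝ))
            = ({y : ℝ | y ^ 2 ≤ x * (t - Ssum θ i z)}).indicator 1 from rfl]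
        rw [integral_indicator_one (measurableSet_le (by fun_prop) measurable_const)]
        rfl

lemma integrable_Dk_Ssum {n : ℕ} (θ : Fin (n + 1) → ℝ) (hθ : ∀ k, 0 < θ k) (i : Fin (n + 1))
    {a : ℝ} (ha : 0 < a) {t : ℝ} (ht : 0 < t) :
    Integrable (fun z => Dk a (t - Ssum θ i z)) (stdGaussianPi (n + 1)) := by
  apply integrable_of_bounded
    ((show Measurable fun z => Dk a (t - Ssum θ i z) from
      (measurable_Dk_snd a).comp (measurable_const.sub (measurable_Ssum θ i))).aestronglyMeasurable)
    (Real.sqrt t / Real.sqrt (2 * π * a))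
  intro z
  rw [abs_of_nonneg (Dk_nonneg _ _)]
  exact Dk_le ha ht.le (by linarith [Ssum_nonneg hθ i z])

lemma hasDerivAt_Fcdf {n : ℕ} (θ : Fin (n + 1) → ℝ) (hθ : ∀ k, 0 < θ k) (i : Fin (n + 1))
    {t : ℝ} (ht : 0 < t) :
    HasDerivAt (fun x => Fcdf (n + 1) (Function.update θ i x) t)
      (∫ z, Dk (θ i) (t - Ssum θ i z) ∂stdGaussianPi (n + 1)) (θ i) := by
  have hθi := hθ i
  set μ := stdGaussianPi (n + 1)
  set S := Ssum θ i with hS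
  have hSm : Measurable S := measurable_Ssum θ i
  have key := hasDerivAt_integral_of_dominated_loc_of_deriv_le
    (F := fun x z => Gm (x * (t - S z))) (F' := fun x z => Dk x (t - S z))
    (x₀ := θ i) (s := Metric.ball (θ i) (θ i / 2)) (μ := μ)
    (bound := fun _ => Real.sqrt t / Real.sqrt (2 * π * (θ i / 2)))
    (Metric.ball_mem_nhds _ (by positivity))
    (Eventually.of_forall fun x =>
      (Gm_measurable.comp ((measurable_const.sub hSm).const_mul x)).aestronglyMeasurable)
    (integrable_of_bounded
      ((Gm_measurable.comp ((measurable_const.sub hSm).const_mul (θ i))).aestronglyMeasurable) 1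
      (fun z => abs_le.mpr ⟨by linarith [Gm_nonneg (θ i * (t - S z))],
        Gm_le_one _⟩))
    (((measurable_Dk_snd (θ i)).comp (measurable_const.sub hSm)).aestronglyMeasurable)
    (ae_of_all _ fun z x hx => by
      have hxpos : θ i / 2 < x := by
        rw [Metric.mem_ball, Real.dist_eq, abs_sub_lt_iff] at hx
        linarith
      have h1 : Dk x (t - S z) ≤ Real.sqrt t / Real.sqrt (2 * π * x) :=
        Dk_le (by linarith) ht.le (by linarith [Ssum_nonneg hθ i z])
      rw [Real.norm_eq_abs, abs_of_nonneg (Dk_nonneg _ _)]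
      refine h1.trans ?_
      apply div_le_div_of_nonneg_left (Real.sqrt_nonneg t)
        (Real.sqrt_pos.mpr (mul_pos (mul_pos two_pos pi_pos) (by linarith [hθ i])))
        (Real.sqrt_le_sqrt (by nlinarith [pi_pos]))
      )
    (integrable_const _)
    (ae_of_all _ fun z x hx => by
      have hxpos : θ i / 2 < x := by
        rw [Metric.mem_ball, Real.dist_eq, abs_sub_lt_iff] at hx
        linarith
      exact hasDerivAt_Gm_mul (t - S z) (by linarith))
  have hev : (fun x => Fcdf (n + 1) (Function.update θ i x) t)
      =ᶠ[nhds (θ i)] (fun x => ∫ z, Gm (x * (t - S z)) ∂μ) := by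
    filter_upwards [eventually_gt_nhds hθi] with x hxpos
    exact Fcdf_eq_integral_Gm θ hθ i hxpos t
  exact key.2.congr_of_eventuallyEq hev
/-! ### Peeling the second coordinate -/

noncomputable def Aint (a b u : ℝ) : ℝ := ∫ y, Dk a (u - y ^ 2 / b) ∂gaussianReal 0 1

noncomputable def Rsum {p : ℕ} (θ : Fin p → ℝ) (i j : Fin p) (z : Fin p → ℝ) : ℝ :=
  ∑ k ∈ (Finset.univ.erase i).erase j, (z k) ^ 2 / θ k

lemma measurable_Rsum {p : ℕ} (θ : Fin p → ℝ) (i j : Fin p) : Measurable (Rsum θ i j) := by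
  apply Finset.measurable_sum
  intro k _
  exact ((measurable_pi_apply k).pow_const 2).div_const _

lemma Rsum_nonneg {p : ℕ} {θ : Fin p → ℝ} (hθ : ∀ k, 0 < θ k) (i j : Fin p) (z : Fin p → ℝ) :
    0 ≤ Rsum θ i j z := by
  apply Finset.sum_nonneg
  intro k _
  have := hθ k
  positivity

lemma Rsum_comm {p : ℕ} (θ : Fin p → ℝ) (i j : Fin p) : Rsum θ i j = Rsum θ j i := by
  unfold Rsum
  have : (Finset.univ.erase i).erase j = (Finset.univ.erase j).erase i := by
    ext k
    simp only [Finset.mem_erase, Finset.mem_univ, and_true]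
    tauto
  rw [this]

lemma second_peel {n : ℕ} (θ : Fin (n + 1) → ℝ) (hθ : ∀ k, 0 < θ k) (i j : Fin (n + 1))
    (hij : j ≠ i) {a t : ℝ} (ha : 0 < a) (ht : 0 < t) :
    ((∫ z, Dk a (t - Ssum θ i z) ∂stdGaussianPi (n + 1))
      = ∫ z, Aint a (θ j) (t - Rsum θ i j z) ∂stdGaussianPi (n + 1)) ∧
    Integrable (fun z => Aint a (θ j) (t - Rsum θ i j z)) (stdGaussianPi (n + 1)) := by
  have hpeel := integral_peel j (fun z => Dk a (t - Ssum θ i z))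
    (integrable_Dk_Ssum θ hθ i ha ht)
  have hkey : ∀ (z : Fin (n + 1) → ℝ),
      (∫ y, Dk a (t - Ssum θ i (Function.update z j y)) ∂gaussianReal 0 1)
        = Aint a (θ j) (t - Rsum θ i j z) := by
    intro z
    have hsplit : ∀ y : ℝ, Ssum θ i (Function.update z j y)
        = y ^ 2 / θ j + Rsum θ i j z := by
      intro y
      rw [Ssum, ← Finset.add_sum_erase _ _ (Finset.mem_erase.mpr ⟨hij, Finset.mem_univ j⟩)]
      congr 1
      · rw [Function.update_self]
      · apply Finset.sum_congr rfl
        intro k hk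
        rw [Function.update_of_ne (Finset.mem_erase.mp hk).1]
    rw [Aint]
    apply integral_congr_ae (ae_of_all _ _)
    intro y
    rw [hsplit y]
    congr 1
    ring
  constructor
  · rw [hpeel.1]
    exact integral_congr_ae (ae_of_all _ hkey)
  · exact hpeel.2.congr (ae_of_all _ hkey)
/-! ### Reduction of `Aint` to an explicit interval integral -/

noncomputable def Jint (a b u : ℝ) : ℝ :=
  ∫ w in (0:ℝ)..u, Real.sqrt (u - w) / Real.sqrt w * Real.exp (-(a * (u - w) + b * w) / 2)

noncomputable def gq (v : ℝ) : ℝ := (Real.sqrt (2 * π))⁻¹ * Real.exp (-v / 2)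

lemma gpdf_eq_gq (s : ℝ) : gpdf s = gq (s ^ 2) := by
  unfold gpdf gaussianPDFReal gq
  norm_num

lemma gpdf_abs (s : ℝ) : gpdf |s| = gpdf s := by
  rw [gpdf_eq_gq, gpdf_eq_gq, sq_abs]

lemma integral_gaussianReal_eq (g : ℝ → ℝ) :
    ∫ y, g y ∂gaussianReal 0 1 = ∫ y, gpdf y * g y := by
  rw [gaussianReal_of_var_ne_zero 0 one_ne_zero]
  rw [show gaussianPDF 0 1 = fun x => ((gaussianPDFReal 0 1 x).toNNReal : ENNReal) from rfl]
  rw [integral_withDensity_eq_integral_smul ((measurable_gaussianPDFReal 0 1).real_toNNReal) g]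
  apply integral_congr_ae (ae_of_all _ _)
  intro y
  rw [NNReal.smul_def, Real.coe_toNNReal _ (gaussianPDFReal_nonneg 0 1 y)]
  rfl

lemma sqrt_image_Ioi : Real.sqrt '' Ioi (0:ℝ) = Ioi (0:ℝ) := by
  ext v
  constructor
  · rintro ⟨x, hx, rfl⟩
    exact Real.sqrt_pos.mpr hx
  · intro hv
    exact ⟨v ^ 2, mem_Ioi.mpr (pow_pos hv 2), by rw [Real.sqrt_sq (le_of_lt hv)]⟩

lemma sqrt_injOn_Ioi : InjOn Real.sqrt (Ioi (0:ℝ)) := by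
  intro x hx y hy h
  have := congrArg (fun r => r ^ 2) h
  simpa [Real.sq_sqrt (le_of_lt hx), Real.sq_sqrt (le_of_lt hy)] using this

/-- change of variables `y ↦ y^2` for integrals over `(0,∞)`. -/
lemma integral_sq_change {Θ : ℝ → ℝ} :
    ∫ s in Ioi (0:ℝ), Θ (s ^ 2) = ∫ v in Ioi (0:ℝ), (2 * Real.sqrt v)⁻¹ * Θ v := by
  have h := integral_image_eq_integral_abs_deriv_smul (f := Real.sqrt)
    (f' := fun v => 1 / (2 * Real.sqrt v)) measurableSet_Ioi
    (fun v hv => (Real.hasDerivAt_sqrt (ne_of_gt hv)).hasDerivWithinAt)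
    sqrt_injOn_Ioi (fun x => Θ (x ^ 2))
  rw [sqrt_image_Ioi] at h
  rw [h]
  apply setIntegral_congr_fun measurableSet_Ioi
  intro v hv
  have hv' : (0:ℝ) < v := hv
  have hsv : (0:ℝ) < Real.sqrt v := Real.sqrt_pos.mpr hv'
  dsimp only
  rw [Real.sq_sqrt hv'.le, smul_eq_mul, abs_of_pos (by rw [one_div]; exact inv_pos.mpr (by linarith)), one_div]

lemma setIntegral_Ioi_eq_intervalIntegral {f : ℝ → ℝ} {u : ℝ} (hu : 0 ≤ u)
    (h : ∀ w, u ≤ w → f w = 0) :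
    ∫ w in Ioi (0:ℝ), f w = ∫ w in (0:ℝ)..u, f w := by
  have heq : EqOn f ((Ioc (0:ℝ) u).indicator f) (Ioi 0) := by
    intro w hw
    by_cases hwu : w ≤ u
    · rw [indicator_of_mem (mem_Ioc.mpr ⟨hw, hwu⟩)]
    · rw [indicator_of_notMem (fun hc => hwu (mem_Ioc.mp hc).2), h w (le_of_not_ge hwu)]
  rw [setIntegral_congr_fun measurableSet_Ioi heq, integral_indicator measurableSet_Ioc,
    Measure.restrict_restrict measurableSet_Ioc,
    show Ioc (0:ℝ) u ∩ Ioi 0 = Ioc 0 u from inter_eq_left.mpr (fun w hw => (mem_Ioc.mp hw).1),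
    intervalIntegral.integral_of_le hu]

lemma Aint_eq_Jint {a b u : ℝ} (ha : 0 < a) (hb : 0 < b) (hu : 0 < u) :
    Aint a b u = Real.sqrt b / (2 * π * Real.sqrt a) * Jint a b u := by
  have h1 : Aint a b u = ∫ y, gpdf y * Dk a (u - y ^ 2 / b) := by
    rw [Aint, integral_gaussianReal_eq]
  have h2' : ∀ y : ℝ, gpdf |y| * Dk a (u - |y| ^ 2 / b) = gpdf y * Dk a (u - y ^ 2 / b) :=
    fun y => by rw [gpdf_abs, sq_abs]
  have h3 : Aint a b u = 2 * ∫ s in Ioi (0:ℝ), gpdf s * Dk a (u - s ^ 2 / b) := by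
    rw [h1]
    calc ∫ y : ℝ, gpdf y * Dk a (u - y ^ 2 / b)
        = ∫ y : ℝ, gpdf |y| * Dk a (u - |y| ^ 2 / b) :=
          integral_congr_ae (ae_of_all _ fun y => (h2' y).symm)
      _ = 2 * ∫ s in Ioi (0:ℝ), gpdf s * Dk a (u - s ^ 2 / b) :=
          integral_comp_abs (f := fun s => gpdf s * Dk a (u - s ^ 2 / b))
  have h5 : Aint a b u
      = 2 * ∫ v in Ioi (0:ℝ), (2 * Real.sqrt v)⁻¹ * (gq v * Dk a (u - v / b)) := by
    rw [h3]
    congr 1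
    calc ∫ s in Ioi (0:ℝ), gpdf s * Dk a (u - s ^ 2 / b)
        = ∫ s in Ioi (0:ℝ), gq (s ^ 2) * Dk a (u - s ^ 2 / b) :=
          setIntegral_congr_fun measurableSet_Ioi (fun s _ => by rw [gpdf_eq_gq])
      _ = ∫ v in Ioi (0:ℝ), (2 * Real.sqrt v)⁻¹ * (gq v * Dk a (u - v / b)) :=
          integral_sq_change (Θ := fun v => gq v * Dk a (u - v / b))
  -- substitute v = b * w
  have h6 := integral_comp_mul_left_Ioi
    (g := fun v => (2 * Real.sqrt v)⁻¹ * (gq v * Dk a (u - v / b))) 0 hb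
  rw [mul_zero] at h6
  have h7 : Aint a b u = 2 * b * ∫ x in Ioi (0:ℝ),
      (fun v => (2 * Real.sqrt v)⁻¹ * (gq v * Dk a (u - v / b))) (b * x) := by
    rw [h6, smul_eq_mul, h5]
    field_simp
  simp only at h7
  have h8 : ∀ w : ℝ, u - b * w / b = u - w := by
    intro w
    field_simp
  -- restrict to the interval [0, u]
  have h9 : ∫ w in Ioi (0:ℝ), (2 * Real.sqrt (b * w))⁻¹ * (gq (b * w) * Dk a (u - b * w / b))
      = ∫ w in (0:ℝ)..u, (2 * Real.sqrt (b * w))⁻¹ * (gq (b * w) * Dk a (u - w)) := by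
    simp only [h8]
    apply setIntegral_Ioi_eq_intervalIntegral hu.le
    intro w hw
    rw [Dk_of_nonpos (by linarith)]
    ring
  rw [h7, h9, Jint, ← intervalIntegral.integral_const_mul, ← intervalIntegral.integral_const_mul]
  apply intervalIntegral.integral_congr
  intro w hw
  rw [uIcc_of_le hu.le] at hw
  dsimp only
  rcases eq_or_lt_of_le (mem_Icc.mp hw).1 with hw0 | hw0
  · rw [← hw0]
    simp [Real.sqrt_zero, Dk]
  · -- algebra for 0 < w
    unfold gq Dk
    have e1 : (0:ℝ) < Real.sqrt w := Real.sqrt_pos.mpr hw0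
    have e2 : (0:ℝ) < Real.sqrt b := Real.sqrt_pos.mpr hb
    have e3 : (0:ℝ) < Real.sqrt a := Real.sqrt_pos.mpr ha
    have e4 : (0:ℝ) < Real.sqrt (2 * π) := Real.sqrt_pos.mpr (by positivity)
    have e5 : Real.exp (-(a * (u - w) + b * w) / 2)
        = Real.exp (-(b * w) / 2) * Real.exp (-(a * (u - w)) / 2) := by
      rw [← Real.exp_add]
      congr 1
      ring
    rw [Real.sqrt_mul hb.le w,
      show Real.sqrt (2 * π * a) = Real.sqrt (2 * π) * Real.sqrt a from by
        rw [show (2:ℝ) * π * a = (2 * π) * a from by ring, Real.sqrt_mul (by positivity)],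
      e5]
    generalize hX : Real.exp (-(b * w) / 2) = X
    generalize hY : Real.exp (-(a * (u - w)) / 2) = Y
    generalize hP : Real.sqrt (2 * π) = P at e4
    generalize hB : Real.sqrt b = B at e2
    rw [show b = B * B from by rw [← hB, Real.mul_self_sqrt hb.le],
      show (2:ℝ) * π = P * P from by rw [← hP, Real.mul_self_sqrt (by positivity)]]
    field_simp
/-! ### The key 1-dimensional inequality -/

lemma Aint_of_nonpos {a b u : ℝ} (hb : 0 < b) (hu : u ≤ 0) : Aint a b u = 0 := by
  rw [Aint]
  rw [show (fun y : ℝ => Dk a (u - y ^ 2 / b)) = fun _ => (0:ℝ) from funext fun y =>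
    Dk_of_nonpos (by nlinarith [div_nonneg (sq_nonneg y) hb.le])]
  exact integral_zero _ _

lemma rpow_half_inv {w : ℝ} (hw : 0 < w) : w ^ (-(1:ℝ)/2) = (Real.sqrt w)⁻¹ := by
  rw [show (-(1:ℝ)/2) = -(1/2 : ℝ) by norm_num, Real.rpow_neg hw.le, ← Real.sqrt_eq_rpow]

lemma intervalIntegrable_base {a b u : ℝ} (ha : 0 < a) (hb : 0 < b) (hu : 0 < u) :
    IntervalIntegrable
      (fun w => Real.sqrt (u - w) / Real.sqrt w * Real.exp (-(a * (u - w) + b * w) / 2))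
      volume 0 u := by
  have hmaj : IntervalIntegrable (fun w : ℝ => Real.sqrt u * w ^ (-(1:ℝ)/2)) volume 0 u :=
    (intervalIntegral.intervalIntegrable_rpow' (by norm_num)).const_mul _
  apply hmaj.mono_fun
  · apply Measurable.aestronglyMeasurable
    fun_prop
  · rw [uIoc_of_le hu.le]
    refine (ae_restrict_iff' measurableSet_Ioc).mpr (ae_of_all _ fun w hw => ?_)
    obtain ⟨hw0, hwu⟩ := mem_Ioc.mp hw
    dsimp only
    have h1 : Real.exp (-(a * (u - w) + b * w) / 2) ≤ 1 := by
      rw [Real.exp_le_one_iff]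
      have : 0 ≤ a * (u - w) := mul_nonneg ha.le (by linarith)
      have : 0 ≤ b * w := by positivity
      linarith
    have h2 : Real.sqrt (u - w) ≤ Real.sqrt u := Real.sqrt_le_sqrt (by linarith)
    have hsw : 0 < Real.sqrt w := Real.sqrt_pos.mpr hw0
    rw [Real.norm_eq_abs, Real.norm_eq_abs, abs_of_nonneg (by positivity),
      abs_of_nonneg (by positivity : (0:ℝ) ≤ Real.sqrt u * w ^ (-(1:ℝ)/2)), rpow_half_inv hw0]
    calc Real.sqrt (u - w) / Real.sqrt w * Real.exp (-(a * (u - w) + b * w) / 2)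
        ≤ Real.sqrt (u - w) / Real.sqrt w * 1 := by
          apply mul_le_mul_of_nonneg_left h1 (by positivity)
      _ = Real.sqrt (u - w) / Real.sqrt w := mul_one _
      _ ≤ Real.sqrt u / Real.sqrt w := by gcongr
      _ = Real.sqrt u * (Real.sqrt w)⁻¹ := by rw [div_eq_mul_inv]

set_option maxHeartbeats 1000000 in
lemma Jint_ineq {a b u : ℝ} (ha : 0 < a) (hab : a < b) (hu : 0 < u) :
    a * Jint b a u < b * Jint a b u := by
  have hb : 0 < b := ha.trans hab
  set E : ℝ → ℝ := fun w => Real.exp (-(a * (u - w) + b * w) / 2) with hE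
  set g1 : ℝ → ℝ := fun w => Real.sqrt (u - w) / Real.sqrt w * E w with hg1def
  set g2 : ℝ → ℝ := fun w => Real.sqrt w / Real.sqrt (u - w) * E w with hg2def
  set q : ℝ → ℝ := fun w =>
    Real.sqrt (u - w) / Real.sqrt w * Real.exp (-(b * (u - w) + a * w) / 2) with hqdef
  have hq : IntervalIntegrable q volume 0 u := intervalIntegrable_base hb ha hu
  have hg1 : IntervalIntegrable g1 volume 0 u := intervalIntegrable_base ha hb hu
  have hg2 : IntervalIntegrable g2 volume 0 u := by
    have h1 := (hq.comp_sub_left u)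
    rw [sub_zero, sub_self] at h1
    have h2 : (fun x => q (u - x)) = g2 := by
      funext x
      simp only [hqdef, hg2def, hE]
      rw [show u - (u - x) = x from by ring]
      congr 2
      ring
    rw [h2] at h1
    exact h1.symm
  have hrefl : Jint b a u = ∫ w in (0:ℝ)..u, g2 w := by
    rw [Jint]
    have h3 := intervalIntegral.integral_comp_sub_left (a := 0) (b := u)
      (fun w => Real.sqrt (u - w) / Real.sqrt w * Real.exp (-(b * (u - w) + a * w) / 2)) u
    rw [sub_self, sub_zero] at h3
    rw [← h3]
    apply intervalIntegral.integral_congr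
    intro w _
    dsimp only
    rw [show u - (u - w) = w from by ring]
    simp only [hg2def, hE]
    congr 2
    ring
  have hJ1 : Jint a b u = ∫ w in (0:ℝ)..u, g1 w := rfl
  set h : ℝ → ℝ := fun w => b * g1 w - a * g2 w with hhdef
  have hh : IntervalIntegrable h volume 0 u := (hg1.const_mul b).sub (hg2.const_mul a)
  have hdiff : b * Jint a b u - a * Jint b a u = ∫ w in (0:ℝ)..u, h w := by
    rw [hJ1, hrefl, hhdef]
    rw [intervalIntegral.integral_sub (hg1.const_mul b) (hg2.const_mul a),
      intervalIntegral.integral_const_mul, intervalIntegral.integral_const_mul]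
  have h052 : IntervalIntegrable h volume 0 (u/2) := hh.mono_set (by
    rw [uIcc_of_le (by linarith : (0:ℝ) ≤ u/2), uIcc_of_le hu.le]
    exact Icc_subset_Icc le_rfl (by linarith))
  have h52u : IntervalIntegrable h volume (u/2) u := hh.mono_set (by
    rw [uIcc_of_le (by linarith : u/2 ≤ u), uIcc_of_le hu.le]
    exact Icc_subset_Icc (by linarith) le_rfl)
  have hsplit : (∫ w in (0:ℝ)..u, h w)
      = (∫ w in (0:ℝ)..(u/2), h w) + ∫ w in (u/2)..u, h w :=
    (intervalIntegral.integral_add_adjacent_intervals h052 h52u).symm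
  have hreflect : (∫ w in (u/2)..u, h w) = ∫ w in (0:ℝ)..(u/2), h (u - w) := by
    have h4 := intervalIntegral.integral_comp_sub_left (a := 0) (b := u/2) h u
    rw [sub_zero, show u - u/2 = u/2 from by ring] at h4
    rw [h4]
  have hcomp : IntervalIntegrable (fun w => h (u - w)) volume 0 (u/2) := by
    have h5 := h52u.comp_sub_left u
    rw [show u - u/2 = u/2 from by ring, sub_self] at h5
    exact h5.symm
  have hsum : (∫ w in (0:ℝ)..u, h w) = ∫ w in (0:ℝ)..(u/2), (h w + h (u - w)) := by
    rw [hsplit, hreflect, intervalIntegral.integral_add h052 hcomp]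
  have hpos : 0 < ∫ w in (0:ℝ)..(u/2), (h w + h (u - w)) := by
    apply intervalIntegral.intervalIntegral_pos_of_pos_on (h052.add hcomp)
    · intro w hw
      obtain ⟨hw0, hwu2⟩ := hw
      have hwu : w < u - w := by linarith
      have hs : 0 < Real.sqrt w := Real.sqrt_pos.mpr hw0
      have hr : 0 < Real.sqrt (u - w) := Real.sqrt_pos.mpr (by linarith)
      have hsr : Real.sqrt w < Real.sqrt (u - w) := Real.sqrt_lt_sqrt hw0.le hwu
      have hX : 0 < E w := Real.exp_pos _
      have hY : 0 < E (u - w) := Real.exp_pos _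
      have hXY : E (u - w) ≤ E w := by
        simp only [hE]
        apply Real.exp_le_exp.mpr
        have : 0 ≤ (b - a) * (u - 2 * w) := mul_nonneg (by linarith) (by linarith)
        nlinarith
      simp only [hhdef, hg1def, hg2def]
      rw [show u - (u - w) = w from by ring]
      set s := Real.sqrt w with hs'
      set r := Real.sqrt (u - w) with hr'
      set X := E w with hX'
      set Y := E (u - w) with hY'
      clear_value s r X Y
      by_contra hc
      push_neg at hc
      have hmul : (b * (r / s * X) - a * (s / r * X) + (b * (s / r * Y) - a * (r / s * Y)))
          * (s * r) = (b * (r * r) - a * (s * s)) * X + (b * (s * s) - a * (r * r)) * Y := by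
        field_simp
      have hnonpos : (b * (r / s * X) - a * (s / r * X) + (b * (s / r * Y) - a * (r / s * Y)))
          * (s * r) ≤ 0 := mul_nonpos_of_nonpos_of_nonneg hc (by positivity)
      rw [hmul] at hnonpos
      have hss : s * s < r * r := by
        nlinarith [mul_pos (sub_pos.mpr hsr) (show (0:ℝ) < r + s by linarith)]
      have k1 : 0 < b * (r * r) - a * (s * s) := by nlinarith [mul_pos hs hs]
      have k2 : 0 ≤ (b * (r * r) - a * (s * s)) * (X - Y) := mul_nonneg k1.le (by linarith)
      have k3 : 0 < ((b - a) * (r * r + s * s)) * Y := by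
        apply mul_pos (mul_pos (by linarith) (by positivity)) hY
      have k4 : (b * (r * r) - a * (s * s)) * X + (b * (s * s) - a * (r * r)) * Y
          = (b * (r * r) - a * (s * s)) * (X - Y) + ((b - a) * (r * r + s * s)) * Y := by
        ring
      linarith
    · linarith
  have : 0 < b * Jint a b u - a * Jint b a u := by
    rw [hdiff, hsum]
    exact hpos
  linarith

lemma Aint_lt {a b u : ℝ} (ha : 0 < a) (hab : a < b) (hu : 0 < u) :
    Aint b a u < Aint a b u := by
  have hb : 0 < b := ha.trans hab
  rw [Aint_eq_Jint ha hb hu, Aint_eq_Jint hb ha hu]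
  have e3 : (0:ℝ) < Real.sqrt a := Real.sqrt_pos.mpr ha
  have e2 : (0:ℝ) < Real.sqrt b := Real.sqrt_pos.mpr hb
  have hD : (0:ℝ) < 2 * π * (Real.sqrt a * Real.sqrt b) := by positivity
  have l1 : Real.sqrt a / (2 * π * Real.sqrt b) * Jint b a u
      = (a * Jint b a u) / (2 * π * (Real.sqrt a * Real.sqrt b)) := by
    rw [div_mul_eq_mul_div, div_eq_div_iff (by positivity) hD.ne']
    linear_combination (Jint b a u * (2 * π * Real.sqrt b)) * Real.mul_self_sqrt ha.le
  have l2 : Real.sqrt b / (2 * π * Real.sqrt a) * Jint a b u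
      = (b * Jint a b u) / (2 * π * (Real.sqrt a * Real.sqrt b)) := by
    rw [div_mul_eq_mul_div, div_eq_div_iff (by positivity) hD.ne']
    linear_combination (Jint a b u * (2 * π * Real.sqrt a)) * Real.mul_self_sqrt hb.le
  rw [l1, l2]
  have hkey := Jint_ineq ha hab hu
  gcongr

lemma Aint_le {a b u : ℝ} (ha : 0 < a) (hab : a < b) :
    Aint b a u ≤ Aint a b u := by
  rcases lt_or_ge 0 u with hu | hu
  · exact (Aint_lt ha hab hu).le
  · rw [Aint_of_nonpos ha hu, Aint_of_nonpos (ha.trans hab) hu]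
/-! ### Final assembly -/

instance : (gaussianReal 0 1).IsOpenPosMeasure := by
  constructor
  intro U hU hne h0
  exact absurd (gaussianReal_absolutelyContinuous' 0 one_ne_zero h0)
    (hU.measure_ne_zero volume hne)

instance stdGaussianPi_openPos (p : ℕ) : (stdGaussianPi p).IsOpenPosMeasure := by
  unfold stdGaussianPi; infer_instance

/-- if `θ i < θ j` then `f_i(t;θ) > f_j(t;θ)`, where `f_i` is the partial
derivative of `F` with respect to `θ i`. -/
theorem partial_deriv_Fcdf_anti (p : ℕ) (θ : Fin p → ℝ) (hθ : ∀ k, 0 < θ k)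
    (i j : Fin p) (hij : θ i < θ j) (t : ℝ) (ht : 0 < t) :
    deriv (fun x => Fcdf p (Function.update θ j x) t) (θ j)
      < deriv (fun x => Fcdf p (Function.update θ i x) t) (θ i) := by
  obtain ⟨n, rfl⟩ : ∃ n, p = n + 1 :=
    ⟨p - 1, (Nat.succ_pred_eq_of_pos (Nat.pos_of_ne_zero fun h => Fin.elim0 (h ▸ i))).symm⟩
  have hne : i ≠ j := fun h => absurd hij (by rw [h]; exact lt_irrefl _)
  have hD_i := (hasDerivAt_Fcdf θ hθ i ht).deriv
  have hD_j := (hasDerivAt_Fcdf θ hθ j ht).deriv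
  rw [hD_i, hD_j]
  have hp_i := second_peel θ hθ i j (Ne.symm hne) (hθ i) ht
  have hp_j := second_peel θ hθ j i hne (hθ j) ht
  rw [Rsum_comm θ j i] at hp_j
  rw [hp_i.1, hp_j.1]
  have hint_i := hp_i.2
  have hint_j := hp_j.2
  have hsub := integral_sub hint_i hint_j
  have hkey : 0 < ∫ z, (Aint (θ i) (θ j) (t - Rsum θ i j z)
      - Aint (θ j) (θ i) (t - Rsum θ i j z)) ∂stdGaussianPi (n + 1) := by
    rw [integral_pos_iff_support_of_nonneg_ae
      (ae_of_all _ fun z => sub_nonneg.mpr (Aint_le (hθ i) hij))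
      (hint_i.sub hint_j)]
    have hUopen : IsOpen {z : Fin (n + 1) → ℝ | Rsum θ i j z < t} := by
      apply isOpen_lt _ continuous_const
      exact continuous_finset_sum _ fun k _ => ((continuous_apply k).pow 2).div_const _
    have hU0 : (fun _ => 0 : Fin (n + 1) → ℝ) ∈ {z : Fin (n + 1) → ℝ | Rsum θ i j z < t} := by
      simp only [mem_setOf_eq, Rsum]
      rw [Finset.sum_eq_zero fun k _ => by norm_num]
      exact ht
    have hUsub : {z : Fin (n + 1) → ℝ | Rsum θ i j z < t} ⊆
        Function.support (fun z => Aint (θ i) (θ j) (t - Rsum θ i j z)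
          - Aint (θ j) (θ i) (t - Rsum θ i j z)) := by
      intro z hz
      have := Aint_lt (hθ i) hij (sub_pos.mpr hz)
      exact fun hc => absurd hc (by simp only [Function.mem_support] at *; linarith)
    calc (0:ENNReal) < stdGaussianPi (n + 1) {z : Fin (n + 1) → ℝ | Rsum θ i j z < t} :=
          hUopen.measure_pos _ ⟨_, hU0⟩
      _ ≤ _ := measure_mono hUsub
  rw [hsub] at hkey
  linarith
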